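/- Let (X, d) be a cone metric space over a Banach space E with normal cone P of normal constant k. A sequence (xₙ) in X is a Cauchy sequence if and only if ‖d(xₙ, xₘ)‖ → 0 as n, m → ∞. -/

import Mathlib

open Filter Topology

/-- A cone in a real normed space: closed, nonempty, not `{0}`, closed under
nonnegative linear combinations, and pointed. -/
def IsCone {E : Type*} [NormedAddCommGroup E] [NormedSpace ℝ E] (P : Set E) : Prop :=
  IsClosed P ∧ P.Nonempty ∧ P ≠ {0} ∧
  (∀ a b : ℝ, 0 ≤ a → 0 ≤ b → ∀ x ∈ P, ∀ y ∈ P, a • x + b • y ∈ P) ∧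
  (∀ x ∈ P, -x ∈ P → x = 0)

/-- The partial ordering induced by a cone: `x ≤ y` iff `y - x ∈ P`. -/
def coneLE {E : Type*} [NormedAddCommGroup E] [NormedSpace ℝ E] (P : Set E) (x y : E) : Prop :=
  y - x ∈ P

/-- `P` is a normal cone with normal constant `k`: `0 ≤ x ≤ y` implies `‖x‖ ≤ k‖y‖`. -/
def IsNormalCone {E : Type*} [NormedAddCommGroup E] [NormedSpace ℝ E] (P : Set E) (k : ℝ) : Prop :=
  ∀ x y : E, x ∈ P → y - x ∈ P → ‖x‖ ≤ k * ‖y‖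

/-- `d` is a cone metric on `X` with values in `(E, P)`. -/
structure IsConeMetric {E : Type*} [NormedAddCommGroup E] [NormedSpace ℝ E]
    (P : Set E) {X : Type*} (d : X → X → E) : Prop where
  mem_cone : ∀ x y, d x y ∈ P
  eq_zero_iff : ∀ x y, d x y = 0 ↔ x = y
  symm : ∀ x y, d x y = d y x
  triangle : ∀ x y z, d x z + d z y - d x y ∈ P

/-- Convergence of a sequence in a cone metric space. -/
def ConeConv {E : Type*} [NormedAddCommGroup E] [NormedSpace ℝ E]
    (P : Set E) {X : Type*} (d : X → X → E) (s : ℕ → X) (x : X) : Prop :=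
  ∀ c ∈ interior P, ∃ N, ∀ n > N, c - d (s n) x ∈ interior P

/-- Cauchy sequences in a cone metric space. -/
def ConeCauchy {E : Type*} [NormedAddCommGroup E] [NormedSpace ℝ E]
    (P : Set E) {X : Type*} (d : X → X → E) (s : ℕ → X) : Prop :=
  ∀ c ∈ interior P, ∃ N, ∀ n > N, ∀ m > N, c - d (s n) (s m) ∈ interior P

/-- A cone metric space is complete if every Cauchy sequence converges. -/
def ConeComplete {E : Type*} [NormedAddCommGroup E] [NormedSpace ℝ E]
    (P : Set E) {X : Type*} (d : X → X → E) : Prop :=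
  ∀ s : ℕ → X, ConeCauchy P d s → ∃ x, ConeConv P d s x


lemma cone_smul_mem_interior {E : Type*} [NormedAddCommGroup E] [NormedSpace ℝ E]
    {P : Set E} (hP : IsCone P) {c : E} (hc : c ∈ interior P) {δ : ℝ} (hδ : 0 < δ) :
    δ • c ∈ interior P := by
  have hmap : IsOpenMap (fun x : E => δ • x) := isOpenMap_smul₀ (ne_of_gt hδ)
  have hopen : IsOpen ((fun x : E => δ • x) '' interior P) := hmap _ isOpen_interior
  have hsub : (fun x : E => δ • x) '' interior P ⊆ P := by
    rintro _ ⟨x, hx, rfl⟩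
    have hxP : x ∈ P := interior_subset hx
    have := hP.2.2.2.1 δ 0 hδ.le le_rfl x hxP x hxP
    simpa using this
  exact interior_maximal hsub hopen ⟨c, hc, rfl⟩

lemma cone_interior_ne_zero {E : Type*} [NormedAddCommGroup E] [NormedSpace ℝ E]
    {P : Set E} (hP : IsCone P) {c : E} (hc : c ∈ interior P) : c ≠ 0 := by
  rintro rfl
  obtain ⟨p, hp, hp0⟩ : ∃ p ∈ P, p ≠ 0 := by
    by_contra h
    push_neg at h
    exact hP.2.2.1 (Set.eq_singleton_iff_nonempty_unique_mem.mpr ⟨hP.2.1, h⟩)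
  obtain ⟨ε, hε, hball⟩ := Metric.mem_nhds_iff.mp (mem_interior_iff_mem_nhds.mp hc)
  set t : ℝ := ε / (2 * ‖p‖) with ht_def
  have hpn : 0 < ‖p‖ := norm_pos_iff.mpr hp0
  have ht : 0 < t := div_pos hε (by positivity)
  have hnorm_tp : ‖t • p‖ < ε := by
    rw [norm_smul, Real.norm_of_nonneg ht.le, ht_def]
    rw [div_mul_eq_mul_div, div_lt_iff₀ (by positivity)]
    nlinarith
  have h1 : t • p ∈ P := hball (by simpa [Metric.mem_ball] using hnorm_tp)
  have h2 : -(t • p) ∈ P := hball (by simpa [Metric.mem_ball] using hnorm_tp)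
  have := hP.2.2.2.2 _ h1 h2
  exact hp0 (by simpa [ne_of_gt ht] using smul_eq_zero.mp this)

theorem coneCauchy_iff_norm_tendsto_zero {E : Type*} [NormedAddCommGroup E] [NormedSpace ℝ E]
    [CompleteSpace E] {X : Type*} (P : Set E) (hP : IsCone P)
    (hint : (interior P).Nonempty) (k : ℝ) (hk : 0 < k) (hnorm : IsNormalCone P k)
    (d : X → X → E) (hd : IsConeMetric P d) (s : ℕ → X) :
    ConeCauchy P d s ↔
      Tendsto (fun p : ℕ × ℕ => ‖d (s p.1) (s p.2)‖) atTop (𝓝 0) := by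
  obtain ⟨c, hc⟩ := hint
  have hc0 : c ≠ 0 := cone_interior_ne_zero hP hc
  have hcn : 0 < ‖c‖ := norm_pos_iff.mpr hc0
  constructor
  · intro hC
    rw [Metric.tendsto_nhds]
    intro ε hε
    set δ : ℝ := ε / (2 * k * ‖c‖) with hδ_def
    have hδ : 0 < δ := div_pos hε (by positivity)
    obtain ⟨N, hN⟩ := hC (δ • c) (cone_smul_mem_interior hP hc hδ)
    rw [eventually_atTop]
    refine ⟨(N + 1, N + 1), ?_⟩
    rintro ⟨n, m⟩ hnm
    obtain ⟨hn, hm⟩ := hnm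
    have hmem : δ • c - d (s n) (s m) ∈ P :=
      interior_subset (hN n (by omega) m (by omega))
    have hle : ‖d (s n) (s m)‖ ≤ k * ‖δ • c‖ :=
      hnorm _ _ (hd.mem_cone _ _) hmem
    have heq : k * ‖δ • c‖ = ε / 2 := by
      rw [norm_smul, Real.norm_of_nonneg hδ.le, hδ_def]
      field_simp
    simp only [Real.dist_eq, sub_zero, abs_of_nonneg (norm_nonneg _)]
    calc ‖d (s n) (s m)‖ ≤ ε / 2 := heq ▸ hle
      _ < ε := by linarith
  · intro hT c' hc'
    obtain ⟨ε, hε, hball⟩ := Metric.mem_nhds_iff.mp (mem_interior_iff_mem_nhds.mp hc')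
    have hev := (Metric.tendsto_nhds.mp hT ε hε)
    rw [eventually_atTop] at hev
    obtain ⟨N, hN⟩ := hev
    refine ⟨max N.1 N.2, fun n hn m hm => ?_⟩
    have hlt : ‖d (s n) (s m)‖ < ε := by
      have := hN (n, m) ⟨le_of_lt (lt_of_le_of_lt (le_max_left _ _) hn),
        le_of_lt (lt_of_le_of_lt (le_max_right _ _) hm)⟩
      simpa [Real.dist_eq, abs_of_nonneg (norm_nonneg _)] using this
    have hmemball : c' - d (s n) (s m) ∈ Metric.ball c' ε := by
      simp [Metric.mem_ball, dist_eq_norm, hlt]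
    exact interior_maximal hball Metric.isOpen_ball hmemball
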